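/- Finite model property for FO[∼]: if a sentence φ ∈ FO_A[∼] is satisfied by some pair (P,w) where w is an infinite P-execution, then φ is also satisfied by some pair (P',w') where w' is a finite P'-execution. -/

import Mathlib

namespace PSyn

/-! ### Basic objects: types, alphabets, processes, events, executions -/

/-- The three process types: system, environment, mixed. -/
inductive PType where
  | s | e | se
deriving DecidableEq

/-- A finite alphabet: letters are the naturals `0, …, n-1`;
`sys a = true` means `a` is a system action (`a ∈ A_s`), otherwise `a ∈ A_e`. -/
structure Alphabet where
  n : ℕ
  sys : ℕ → Bool

/-- An event is a pair (letter, process identity). -/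
abbrev Event := ℕ × ℕ

/-- A process triple `P = (P_s, P_e, P_se)`: pairwise disjoint finite sets of processes. -/
structure ProcTriple where
  Ps : Finset ℕ
  Pe : Finset ℕ
  Pse : Finset ℕ
  disj_se : Disjoint Ps Pe
  disj_sse : Disjoint Ps Pse
  disj_ese : Disjoint Pe Pse

def ProcTriple.ofType (P : ProcTriple) : PType → Finset ℕ
  | .s => P.Ps
  | .e => P.Pe
  | .se => P.Pse

def ProcTriple.all (P : ProcTriple) : Finset ℕ := P.Ps ∪ P.Pe ∪ P.Pse

/-- `σ ∈ Σ_s = A_s × (P_s ∪ P_se)`. -/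
def isSysEvent (Alph : Alphabet) (P : ProcTriple) (σ : Event) : Prop :=
  σ.1 < Alph.n ∧ Alph.sys σ.1 = true ∧ (σ.2 ∈ P.Ps ∨ σ.2 ∈ P.Pse)

/-- `σ ∈ Σ_e = A_e × (P_e ∪ P_se)`. -/
def isEnvEvent (Alph : Alphabet) (P : ProcTriple) (σ : Event) : Prop :=
  σ.1 < Alph.n ∧ Alph.sys σ.1 = false ∧ (σ.2 ∈ P.Pe ∨ σ.2 ∈ P.Pse)

def isEvent (Alph : Alphabet) (P : ProcTriple) (σ : Event) : Prop :=
  isSysEvent Alph P σ ∨ isEnvEvent Alph P σ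

/-- A finite or infinite word over events. -/
inductive Exec where
  | fin : List Event → Exec
  | inf : (ℕ → Event) → Exec

/-- A `P`-execution: every event is an event of `P` over the alphabet. -/
def Exec.valid (Alph : Alphabet) (P : ProcTriple) : Exec → Prop
  | .fin l => ∀ σ ∈ l, isEvent Alph P σ
  | .inf g => ∀ i, isEvent Alph P (g i)

def Exec.at? : Exec → ℕ → Option Event
  | .fin l, i => l[i]?
  | .inf g, i => some (g i)

/-- The set of positions of an execution. -/
def Exec.posDom : Exec → ℕ → Prop
  | .fin l, i => i < l.length
  | .inf _, _ => True

/-- Elements of the structure associated with `(P, w)`: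
`inl p` is a process, `inr i` is a position. -/
abbrev Elem := ℕ ⊕ ℕ

/-- The universe `P ⊎ Pos(w)`. -/
def elemDom (P : ProcTriple) (w : Exec) : Elem → Prop
  | .inl p => p ∈ P.all
  | .inr i => w.posDom i

/-- The process an element belongs to (a process belongs to itself; a position
to the process executing it).  Two elements are `∼`-equivalent iff they have
the same process. -/
def procOf (w : Exec) : Elem → Option ℕ
  | .inl p => some p
  | .inr i => (w.at? i).map Prod.snd

def letterOf (w : Exec) : Elem → Option ℕ
  | .inl _ => none
  | .inr i => (w.at? i).map Prod.fst

/-! ### First-order logic FO_A[∼,<,+1] -/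

/-- Syntax of `FO_A[∼,<,+1]`; variables are naturals, letters are naturals. -/
inductive FO where
  | ptype : PType → ℕ → FO
  | letter : ℕ → ℕ → FO
  | eq : ℕ → ℕ → FO
  | sim : ℕ → ℕ → FO
  | lt : ℕ → ℕ → FO
  | succ : ℕ → ℕ → FO
  | not : FO → FO
  | or : FO → FO → FO
  | ex : ℕ → FO → FO

/-- Satisfaction of a formula in the structure `S_(P,w)` under a valuation. -/
def Sat (P : ProcTriple) (w : Exec) : (ℕ → Elem) → FO → Prop
  | v, .ptype θ x => ∃ p, v x = Sum.inl p ∧ p ∈ P.ofType θ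
  | v, .letter a x => letterOf w (v x) = some a
  | v, .eq x y => v x = v y
  | v, .sim x y => (procOf w (v x)).isSome ∧ procOf w (v x) = procOf w (v y)
  | v, .lt x y => ∃ i j, v x = Sum.inr i ∧ v y = Sum.inr j ∧ i < j ∧ w.posDom j
  | v, .succ x y => ∃ i, v x = Sum.inr i ∧ v y = Sum.inr (i + 1) ∧ w.posDom (i + 1)
  | v, .not φ => ¬ Sat P w v φ
  | v, .or φ ψ => Sat P w v φ ∨ Sat P w v ψ
  | v, .ex x φ => ∃ u : Elem, elemDom P w u ∧ Sat P w (Function.update v x u) φ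

/-- Satisfaction for sentences: `(P,w) ⊨ φ` (the valuation is irrelevant for sentences). -/
def SatS (P : ProcTriple) (w : Exec) (φ : FO) : Prop :=
  Sat P w (fun _ => Sum.inl 0) φ

def FO.free : FO → Finset ℕ
  | .ptype _ x => {x}
  | .letter _ x => {x}
  | .eq x y => {x, y}
  | .sim x y => {x, y}
  | .lt x y => {x, y}
  | .succ x y => {x, y}
  | .not φ => φ.free
  | .or φ ψ => φ.free ∪ ψ.free
  | .ex x φ => φ.free.erase x

/-- A sentence has no free variables. -/
def FO.isSentence (φ : FO) : Prop := φ.free = ∅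

def FO.vars : FO → Finset ℕ
  | .ptype _ x => {x}
  | .letter _ x => {x}
  | .eq x y => {x, y}
  | .sim x y => {x, y}
  | .lt x y => {x, y}
  | .succ x y => {x, y}
  | .not φ => φ.vars
  | .or φ ψ => φ.vars ∪ ψ.vars
  | .ex x φ => insert x φ.vars

/-- The two-variable fragment: only the variable names `0` and `1` are used. -/
def FO.twoVar (φ : FO) : Prop := φ.vars ⊆ ({0, 1} : Finset ℕ)

/-- The fragment `FO_A[∼]`: neither `<` nor `+1` occurs. -/
def FO.onlySim : FO → Prop
  | .lt _ _ => False
  | .succ _ _ => False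
  | .not φ => φ.onlySim
  | .or φ ψ => φ.onlySim ∧ ψ.onlySim
  | .ex _ φ => φ.onlySim
  | _ => True

/-! ### The asynchronous synthesis game and `Win(φ)` -/

/-- A `P`-strategy for System: `none` plays ε, `some σ` proposes the system event `σ`. -/
abbrev Strategy := List Event → Option Event

/-- The strategy only proposes system events (its codomain is `Σ_s ∪ {ε}`). -/
def properStrategy (Alph : Alphabet) (P : ProcTriple) (f : Strategy) : Prop :=
  ∀ u σ, f u = some σ → isSysEvent Alph P σ

/-- The prefix of length `i` of an execution. -/
def Exec.pre : Exec → ℕ → List Event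
  | .fin l, i => l.take i
  | .inf g, i => (List.range i).map g

/-- `w` is `f`-compatible: every system event of `w` is the one proposed by `f`. -/
def compatible (Alph : Alphabet) (P : ProcTriple) (f : Strategy) (w : Exec) : Prop :=
  ∀ i σ, w.at? i = some σ → isSysEvent Alph P σ → f (w.pre i) = some σ

/-- `w` is `f`-fair. -/
def fair (Alph : Alphabet) (P : ProcTriple) (f : Strategy) : Exec → Prop
  | .fin l => f l = none
  | .inf g =>
      {i : ℕ | f (Exec.pre (Exec.inf g) i) ≠ none}.Infinite →
      {j : ℕ | isSysEvent Alph P (g j)}.Infinite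

/-- `f` is `P`-winning for `φ`. -/
def winningStrategy (Alph : Alphabet) (P : ProcTriple) (φ : FO) (f : Strategy) : Prop :=
  properStrategy Alph P f ∧
  ∀ w : Exec, w.valid Alph P → compatible Alph P f w → fair Alph P f w → SatS P w φ

/-- Triples of naturals, indexed by the process types (s, e, se). -/
abbrev Tok := ℕ × ℕ × ℕ

/-- `Win(φ)`: the set of triples `(k_s, k_e, k_se)` admitting a winning System strategy. -/
def WinFO (Alph : Alphabet) (φ : FO) : Set Tok :=
  { k | ∃ P : ProcTriple,
      P.Ps.card = k.1 ∧ P.Pe.card = k.2.1 ∧ P.Pse.card = k.2.2 ∧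
      ∃ f : Strategy, winningStrategy Alph P φ f }

/-! ### Parameterized vector games -/

/-- Locations: `L = {0,…,B}^A`. -/
abbrev Loc (n B : ℕ) := Fin n → Fin (B + 1)

/-- A local acceptance condition: for each process type a pair `(⋈, n)`,
where the Boolean `true` stands for `=` and `false` for `≥`. -/
abbrev LCond := (Bool × ℕ) × (Bool × ℕ) × (Bool × ℕ)

/-- Configurations: `C : L → ℕ^T`. -/
abbrev GConfig (n B : ℕ) := Loc n B → Tok

/-- Transitions: maps `L × L → ℕ^T`. -/
abbrev GTrans (n B : ℕ) := Loc n B → Loc n B → Tok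

/-- A parameterized vector game `G = (A, B, F)`. -/
structure PVG where
  Alph : Alphabet
  B : ℕ
  F : List (Loc Alph.n B → LCond)

def cmpHolds (c : Bool × ℕ) (m : ℕ) : Prop := if c.1 then m = c.2 else c.2 ≤ m

def lcondHolds (κ : LCond) (t : Tok) : Prop :=
  cmpHolds κ.1 t.1 ∧ cmpHolds κ.2.1 t.2.1 ∧ cmpHolds κ.2.2 t.2.2

/-- `C ⊨ F`. -/
def accept (G : PVG) (C : GConfig G.Alph.n G.B) : Prop :=
  ∃ κ ∈ G.F, ∀ ℓ, lcondHolds (κ ℓ) (C ℓ)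

/-- `ℓ + a`: increase coordinate `a` by one, capped at `B`. -/
def locAdd {n B : ℕ} (ℓ : Loc n B) (a : ℕ) : Loc n B :=
  fun i =>
    if (i : ℕ) = a then ⟨min ((ℓ i : ℕ) + 1) B, Nat.lt_succ_of_le (min_le_right _ _)⟩
    else ℓ i

/-- `ℓ + w` for a finite word `w` over the alphabet. -/
def locAddW {n B : ℕ} (ℓ : Loc n B) : List ℕ → Loc n B
  | [] => ℓ
  | a :: u => locAddW (locAdd ℓ a) u

def isSysWord (Alph : Alphabet) (u : List ℕ) : Prop :=
  ∀ a ∈ u, a < Alph.n ∧ Alph.sys a = true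

def isEnvWord (Alph : Alphabet) (u : List ℕ) : Prop :=
  ∀ a ∈ u, a < Alph.n ∧ Alph.sys a = false

/-- System transitions: values in `ℕ × {0} × ℕ` and moves along system words. -/
def isSysTrans (G : PVG) (τ : GTrans G.Alph.n G.B) : Prop :=
  ∀ ℓ ℓ', (τ ℓ ℓ').2.1 = 0 ∧
    (τ ℓ ℓ' ≠ ((0, 0, 0) : Tok) → ∃ u : List ℕ, isSysWord G.Alph u ∧ ℓ' = locAddW ℓ u)

/-- Environment transitions: values in `{0} × ℕ × ℕ` and moves along environment words. -/
def isEnvTrans (G : PVG) (τ : GTrans G.Alph.n G.B) : Prop :=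
  ∀ ℓ ℓ', (τ ℓ ℓ').1 = 0 ∧
    (τ ℓ ℓ' ≠ ((0, 0, 0) : Tok) → ∃ u : List ℕ, isEnvWord G.Alph u ∧ ℓ' = locAddW ℓ u)

def outm {n B : ℕ} (τ : GTrans n B) (ℓ : Loc n B) : Tok := ∑ ℓ' : Loc n B, τ ℓ ℓ'

def inm {n B : ℕ} (τ : GTrans n B) (ℓ : Loc n B) : Tok := ∑ ℓ' : Loc n B, τ ℓ' ℓ

/-- Componentwise order on `ℕ^T`. -/
def tokLe (s t : Tok) : Prop := s.1 ≤ t.1 ∧ s.2.1 ≤ t.2.1 ∧ s.2.2 ≤ t.2.2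

def applicable {n B : ℕ} (τ : GTrans n B) (C : GConfig n B) : Prop :=
  ∀ ℓ, tokLe (outm τ ℓ) (C ℓ)

/-- `τ(C)(ℓ) = C(ℓ) − out_τ(ℓ) + in_τ(ℓ)` (componentwise). -/
def applyT {n B : ℕ} (τ : GTrans n B) (C : GConfig n B) : GConfig n B :=
  fun ℓ => C ℓ - outm τ ℓ + inm τ ℓ

/-- The configuration reached from `C0` after applying the transitions `ts` in order. -/
def confAt {n B : ℕ} (C0 : GConfig n B) (ts : List (GTrans n B)) : GConfig n B :=
  ts.foldl (fun C τ => applyT τ C) C0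

/-- A valid `C0`-play, represented by its list of transitions
(step `i`, 0-based, is System's if `i` is even, Environment's if `i` is odd). -/
def validPlay (G : PVG) (C0 : GConfig G.Alph.n G.B)
    (ts : List (GTrans G.Alph.n G.B)) : Prop :=
  ∀ i (h : i < ts.length),
    applicable (ts.get ⟨i, h⟩) (confAt C0 (ts.take i)) ∧
    (i % 2 = 0 → isSysTrans G (ts.get ⟨i, h⟩) ∧ accept G (confAt C0 (ts.take (i + 1)))) ∧
    (i % 2 = 1 → isEnvTrans G (ts.get ⟨i, h⟩) ∧ ¬ accept G (confAt C0 (ts.take (i + 1))))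

/-- A strategy for System in the game: a partial map from plays to transitions. -/
abbrev GStrat (n B : ℕ) := List (GTrans n B) → Option (GTrans n B)

/-- `f(C)` is defined, and whenever `f(π) = τ` for a valid play π ending in `C_i`,
`τ` is a system transition, applicable at `C_i`, and `τ(C_i) ⊨ F`. -/
def properGStrat (G : PVG) (C0 : GConfig G.Alph.n G.B) (f : GStrat G.Alph.n G.B) : Prop :=
  (f []).isSome ∧
  ∀ ts τ, validPlay G C0 ts → f ts = some τ →
    isSysTrans G τ ∧ applicable τ (confAt C0 ts) ∧ accept G (applyT τ (confAt C0 ts))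

def gCompatible {n B : ℕ} (f : GStrat n B) (ts : List (GTrans n B)) : Prop :=
  ∀ i (h : i < ts.length), i % 2 = 0 → f (ts.take i) = some (ts.get ⟨i, h⟩)

def gMaximal (G : PVG) (C0 : GConfig G.Alph.n G.B) (f : GStrat G.Alph.n G.B)
    (ts : List (GTrans G.Alph.n G.B)) : Prop :=
  ¬ ∃ ts', ts <+: ts' ∧ ts ≠ ts' ∧ validPlay G C0 ts' ∧ gCompatible f ts'

def winningGStrat (G : PVG) (C0 : GConfig G.Alph.n G.B) (f : GStrat G.Alph.n G.B) : Prop :=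
  properGStrat G C0 f ∧
  ∀ ts, validPlay G C0 ts → gCompatible f ts → gMaximal G C0 f ts →
    accept G (confAt C0 ts)

/-- A configuration is winning for System if System has a winning strategy from it. -/
def winningConf (G : PVG) (C0 : GConfig G.Alph.n G.B) : Prop :=
  ∃ f, winningGStrat G C0 f

/-- The all-zero location `ℓ_0`. -/
def loc0 (n B : ℕ) : Loc n B := fun _ => 0

/-- `C_k⃗`: all `k⃗` tokens on `ℓ_0`. -/
def initConfig {n B : ℕ} (k : Tok) : GConfig n B :=
  Function.update (fun _ => ((0, 0, 0) : Tok)) (loc0 n B) k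

/-- `Win(G)`. -/
def WinG (G : PVG) : Set Tok :=
  { k | winningConf G (initConfig k) }

/-! ### Environment chains and constants of a game -/

/-- `C <_e C'`. -/
def envStep (G : PVG) (C C' : GConfig G.Alph.n G.B) : Prop :=
  C ≠ C' ∧ ∃ τ, isEnvTrans G τ ∧ applicable τ C ∧ C' = applyT τ C

/-- There is a chain `C = C_0 <_e C_1 <_e … <_e C_d`. -/
def hasChain (G : PVG) (C : GConfig G.Alph.n G.B) (d : ℕ) : Prop :=
  ∃ cs : ℕ → GConfig G.Alph.n G.B, cs 0 = C ∧ ∀ i < d, envStep G (cs i) (cs (i + 1))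

/-- `C ∈ Conf_d`: the longest `<_e`-chain starting in `C` has length exactly `d`. -/
def ConfD (G : PVG) (C : GConfig G.Alph.n G.B) (d : ℕ) : Prop :=
  hasChain G C d ∧ ¬ hasChain G C (d + 1)

def lcondMax (κ : LCond) : ℕ := max κ.1.2 (max κ.2.1.2 κ.2.2.2)

/-- `K`: the largest constant occurring in the acceptance condition `F`. -/
def maxConst (G : PVG) : ℕ :=
  (G.F.map fun κ => Finset.univ.sup fun ℓ : Loc G.Alph.n G.B => lcondMax (κ ℓ)).foldr max 0

/-- `|A_e|`: the number of environment letters. -/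
def envCard (Alph : Alphabet) : ℕ :=
  ((Finset.range Alph.n).filter fun a => Alph.sys a = false).card

/-- `|L| = (B+1)^|A|`. -/
def numLoc (G : PVG) : ℕ := (G.B + 1) ^ G.Alph.n

/-! ### Cutoffs -/

/-- `k⃗_0` is a cutoff of `W` with respect to `(N_s, N_e, N_se)`. -/
def IsCutoff (Ns Ne Nse : Set ℕ) (W : Set Tok) (k0 : Tok) : Prop :=
  k0.1 ∈ Ns ∧ k0.2.1 ∈ Ne ∧ k0.2.2 ∈ Nse ∧
  ((∀ k : Tok, k.1 ∈ Ns → k.2.1 ∈ Ne → k.2.2 ∈ Nse →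
      k0.1 ≤ k.1 → k0.2.1 ≤ k.2.1 → k0.2.2 ≤ k.2.2 → k ∈ W) ∨
   (∀ k : Tok, k.1 ∈ Ns → k.2.1 ∈ Ne → k.2.2 ∈ Nse →
      k0.1 ≤ k.1 → k0.2.1 ≤ k.2.1 → k0.2.2 ≤ k.2.2 → k ∉ W))

/-! ### Counting formulas and the normal form for FO[∼] -/

def FO.and (φ ψ : FO) : FO := FO.not (FO.or (FO.not φ) (FO.not ψ))

def FO.imp (φ ψ : FO) : FO := FO.or (FO.not φ) ψ

def FO.iff (φ ψ : FO) : FO := FO.and (φ.imp ψ) (ψ.imp φ)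

def FO.all (x : ℕ) (φ : FO) : FO := FO.not (FO.ex x (FO.not φ))

def trueFO : FO := FO.eq 0 0

def bigAnd (l : List FO) : FO := l.foldr FO.and trueFO

def bigOr (l : List FO) : FO := l.foldr FO.or (FO.not trueFO)

/-- `∃^{≥m} y. (mk y)`: there are at least `m` distinct witnesses; the witness
variables are `base, base+1, …, base+m-1`. -/
def exGe (m base : ℕ) (mk : ℕ → FO) : FO :=
  let distinct : List FO :=
    (List.range m).flatMap fun i =>
      ((List.range m).filter fun j => decide (i < j)).map fun j =>
        FO.not (FO.eq (base + i) (base + j))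
  let body : FO :=
    FO.and (bigAnd distinct) (bigAnd ((List.range m).map fun i => mk (base + i)))
  ((List.range m).map (base + ·)).foldr FO.ex body

/-- `∃^{=m} y. (mk y) := ∃^{≥m} y. (mk y) ∧ ¬ ∃^{≥m+1} y. (mk y)`. -/
def exEq (m base : ℕ) (mk : ℕ → FO) : FO :=
  FO.and (exGe m base mk) (FO.not (exGe (m + 1) base mk))

/-- `ψ_{B,ℓ}(y)`: in the class of `y`, each letter `a` occurs exactly `ℓ(a)` times
if `ℓ(a) < B`, and at least `ℓ(a)` times if `ℓ(a) = B`. -/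
def psiCount (n B : ℕ) (ℓ : ℕ → ℕ) (y : ℕ) : FO :=
  bigAnd ((List.range n).map fun a =>
    if ℓ a < B then
      exEq (ℓ a) (y + 1) (fun z => FO.and (FO.sim y z) (FO.letter a z))
    else
      exGe (ℓ a) (y + 1) (fun z => FO.and (FO.sim y z) (FO.letter a z)))

/-- `∃^{⋈m} y. (θ(y) ∧ ψ_{B,ℓ}(y))`, where `⋈` is `=` if `isEq` and `≥` otherwise. -/
def nfAtom (n B : ℕ) (isEq : Bool) (m : ℕ) (θ : PType) (ℓ : ℕ → ℕ) : FO :=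
  let mk : ℕ → FO := fun y => FO.and (FO.ptype θ y) (psiCount n B ℓ y)
  if isEq then exEq m 0 mk else exGe m 0 mk

/-! ### The normalized synthesis problem -/

/-- A normalized strategy: maps finite executions to finite system words. -/
abbrev NormStrategy := List Event → Option (List Event)

/-- A normalized `P`-execution, given by its block decomposition `bs`
(`bs[j]` with `j` even is a System block, `j` odd an Environment block;
this corresponds to the 1-based indexing `w = w_1 … w_n` of the paper). -/
def NormExec (Alph : Alphabet) (P : ProcTriple) (φ : FO) (bs : List (List Event)) : Prop :=
  1 ≤ bs.length ∧
  ∀ j (h : j < bs.length),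
    (j % 2 = 0 → (∀ σ ∈ bs.get ⟨j, h⟩, isSysEvent Alph P σ) ∧
        SatS P (Exec.fin ((bs.take (j + 1)).flatten)) φ) ∧
    (j % 2 = 1 → (∀ σ ∈ bs.get ⟨j, h⟩, isEnvEvent Alph P σ) ∧
        ¬ SatS P (Exec.fin ((bs.take (j + 1)).flatten)) φ)

/-- Properness of a normalized strategy: `f(ε)` is defined, outputs are system
words, and `(P, w · f(w)) ⊨ φ` whenever `f(w)` is defined. -/
def properNStrat (Alph : Alphabet) (P : ProcTriple) (φ : FO) (f : NormStrategy) : Prop :=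
  (f []).isSome ∧
  ∀ w u, f w = some u →
    (∀ σ ∈ u, isSysEvent Alph P σ) ∧ SatS P (Exec.fin (w ++ u)) φ

def nCompatible (f : NormStrategy) (bs : List (List Event)) : Prop :=
  ∀ j (h : j < bs.length), j % 2 = 0 → f ((bs.take j).flatten) = some (bs.get ⟨j, h⟩)

def nMaximal (Alph : Alphabet) (P : ProcTriple) (φ : FO) (f : NormStrategy)
    (bs : List (List Event)) : Prop :=
  ¬ ∃ bs', bs <+: bs' ∧ bs ≠ bs' ∧ NormExec Alph P φ bs' ∧ nCompatible f bs'

def winningNStrategy (Alph : Alphabet) (P : ProcTriple) (φ : FO) (f : NormStrategy) : Prop :=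
  properNStrat Alph P φ f ∧
  ∀ bs, NormExec Alph P φ bs → nCompatible f bs → nMaximal Alph P φ f bs →
    SatS P (Exec.fin bs.flatten) φ

/-- `NWin(φ)`. -/
def NWin (Alph : Alphabet) (φ : FO) : Set Tok :=
  { k | ∃ P : ProcTriple,
      P.Ps.card = k.1 ∧ P.Pe.card = k.2.1 ∧ P.Pse.card = k.2.2 ∧
      ∃ f : NormStrategy, winningNStrategy Alph P φ f }

/-! ### Concrete alphabet and formulas of the examples -/

/-- The alphabet with `A_s = {a, b} = {0, 1}` and `A_e = {c, d} = {2, 3}`. -/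
def alph4 : Alphabet := ⟨4, fun a => decide (a < 2)⟩

/-- `φ_1 = ∀x.((s(x) ∨ se(x)) → ∃y.(x∼y ∧ (a(y) ∨ b(y))))`. -/
def phi1 : FO :=
  FO.all 0 (FO.imp (FO.or (FO.ptype .s 0) (FO.ptype .se 0))
    (FO.ex 1 (FO.and (FO.sim 0 1) (FO.or (FO.letter 0 1) (FO.letter 1 1)))))

/-- `φ_4 = ∀x.((∃^{=2}y.(x∼y ∧ a(y))) ↔ (∃^{=2}y.(x∼y ∧ d(y))))`. -/
def phi4 : FO :=
  FO.all 0 (FO.iff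
    (exEq 2 1 fun y => FO.and (FO.sim 0 y) (FO.letter 0 y))
    (exEq 2 1 fun y => FO.and (FO.sim 0 y) (FO.letter 3 y)))

/-- Vectors `{0,…,3}^{4}` as functions `ℕ → ℕ`. -/
def vec4 (v0 v1 v2 v3 : ℕ) : ℕ → ℕ := fun i => [v0, v1, v2, v3].getD i 0

def allVecs4 : List (ℕ → ℕ) :=
  (List.range 4).flatMap fun v0 =>
    (List.range 4).flatMap fun v1 =>
      (List.range 4).flatMap fun v2 =>
        (List.range 4).map fun v3 => vec4 v0 v1 v2 v3

/-- `Z`: vectors with `ℓ(a) = 2 ≠ ℓ(d)` or `ℓ(d) = 2 ≠ ℓ(a)` (letters `a = 0`, `d = 3`). -/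
def Zvecs : List (ℕ → ℕ) :=
  allVecs4.filter fun ℓ => decide ((ℓ 0 = 2 ∧ ℓ 3 ≠ 2) ∨ (ℓ 3 = 2 ∧ ℓ 0 ≠ 2))

/-- `φ_4' = ⋀_{θ ∈ T, ℓ ∈ Z} ∃^{=0} y.(θ(y) ∧ ψ_{3,ℓ}(y))`. -/
def phi4' : FO :=
  bigAnd (([PType.s, PType.e, PType.se].flatMap fun θ =>
    Zvecs.map fun ℓ => nfAtom 4 3 true 0 θ ℓ))

/-! ### Effective encodings of inputs (for decidability statements) -/

def decodePType (k : ℕ) : PType :=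
  if k % 3 = 0 then .s else if k % 3 = 1 then .e else .se

/-- Surjective decoding of formulas from naturals (with fuel). -/
def decodeFOAux : ℕ → ℕ → FO
  | 0, _ => FO.eq 0 0
  | fuel + 1, c =>
    let t := c % 9
    let m := c / 9
    let a := m.unpair.1
    let b := m.unpair.2
    if t = 0 then FO.ptype (decodePType a) b
    else if t = 1 then FO.letter a b
    else if t = 2 then FO.eq a b
    else if t = 3 then FO.sim a b
    else if t = 4 then FO.lt a b
    else if t = 5 then FO.succ a b
    else if t = 6 then FO.not (decodeFOAux fuel m)
    else if t = 7 then FO.or (decodeFOAux fuel a) (decodeFOAux fuel b)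
    else FO.ex a (decodeFOAux fuel b)

def decodeFO (c : ℕ) : FO := decodeFOAux c c

/-- Decoding an input of the synthesis/satisfiability problems: an alphabet
(size and partition) together with a formula. -/
def decodeFOInput (c : ℕ) : Alphabet × FO :=
  (⟨c.unpair.1.unpair.1, fun a => (c.unpair.1.unpair.2).testBit a⟩, decodeFO c.unpair.2)

def decodeBN (m : ℕ) : Bool × ℕ := (decide (m % 2 = 0), m / 2)

def decodeLCond (m : ℕ) : LCond :=
  (decodeBN m.unpair.1, decodeBN m.unpair.2.unpair.1, decodeBN m.unpair.2.unpair.2)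

/-- An explicit index of a location, used to decode local acceptance conditions. -/
def locIndex {n B : ℕ} (ℓ : Loc n B) : ℕ := ∑ i : Fin n, (ℓ i : ℕ) * (B + 1) ^ (i : ℕ)

/-- Decoding a parameterized vector game from a natural number. -/
def decodeGame (c : ℕ) : PVG :=
  let n := c.unpair.1.unpair.1
  let sy := c.unpair.1.unpair.2
  let B := c.unpair.2.unpair.1
  let Fc := c.unpair.2.unpair.2
  { Alph := ⟨n, fun a => sy.testBit a⟩
    B := B
    F := (Denumerable.ofNat (List ℕ) Fc).map fun kc =>
      fun ℓ => decodeLCond ((Denumerable.ofNat (List ℕ) kc).getD (locIndex ℓ) 0) }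


/-! ### Auxiliary development for the finite model property -/

/-- Matching relation between elements of two structures over the same process
triple: processes match themselves, positions match positions carrying the
same event. -/
def Rel (wa wb : Exec) (u1 u2 : Elem) : Prop :=
  (∃ p, u1 = Sum.inl p ∧ u2 = Sum.inl p) ∨
  (∃ i j σ, u1 = Sum.inr i ∧ u2 = Sum.inr j ∧ wa.at? i = some σ ∧ wb.at? j = some σ)

lemma Rel.symm' {wa wb : Exec} {u1 u2 : Elem} (h : Rel wa wb u1 u2) :
    Rel wb wa u2 u1 := by
  rcases h with ⟨p, h1, h2⟩ | ⟨i, j, σ, h1, h2, h3, h4⟩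
  · exact Or.inl ⟨p, h2, h1⟩
  · exact Or.inr ⟨j, i, σ, h2, h1, h4, h3⟩

/-- Quantifier depth. -/
def qd : FO → ℕ
  | .not φ => qd φ
  | .or φ ψ => max (qd φ) (qd ψ)
  | .ex _ φ => qd φ + 1
  | _ => 0

/-- Counting condition: for every event, either both executions have the same
finite number of positions carrying it, or both have at least `K` such
positions. -/
def SCond (wa wb : Exec) (K : ℕ) : Prop :=
  ∀ σ : Event,
    ({i | wa.at? i = some σ}.Finite ∧ {j | wb.at? j = some σ}.Finite ∧
      {i | wa.at? i = some σ}.ncard = {j | wb.at? j = some σ}.ncard) ∨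
    ((∃ T : Finset ℕ, ↑T ⊆ {i | wa.at? i = some σ} ∧ K ≤ T.card) ∧
     (∃ T : Finset ℕ, ↑T ⊆ {j | wb.at? j = some σ} ∧ K ≤ T.card))

lemma SCond.symm' {wa wb : Exec} {K : ℕ} (h : SCond wa wb K) : SCond wb wa K := by
  intro σ
  rcases h σ with ⟨h1, h2, h3⟩ | ⟨h1, h2⟩
  · exact Or.inl ⟨h2, h1, h3.symm⟩
  · exact Or.inr ⟨h2, h1⟩

lemma exists_at?_of_posDom {w : Exec} {i : ℕ} (h : w.posDom i) :
    ∃ σ, w.at? i = some σ := by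
  cases w with
  | fin l =>
      have hi : i < l.length := h
      exact ⟨l[i], by simp [Exec.at?, List.getElem?_eq_getElem hi]⟩
  | inf g => exact ⟨g i, rfl⟩

lemma posDom_of_at? {w : Exec} {i : ℕ} {σ : Event} (h : w.at? i = some σ) :
    w.posDom i := by
  cases w with
  | fin l =>
      have hh : l[i]? = some σ := h
      show i < l.length
      by_contra hc
      rw [List.getElem?_eq_none (Nat.le_of_not_lt hc)] at hh
      cases hh
  | inf g => trivial

lemma procOf_rel {wa wb : Exec} {u1 u2 : Elem} (h : Rel wa wb u1 u2) :
    procOf wa u1 = procOf wb u2 := by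
  rcases h with ⟨p, h1, h2⟩ | ⟨i, j, σ, h1, h2, h3, h4⟩
  · simp [h1, h2, procOf]
  · simp [h1, h2, procOf, h3, h4]

lemma letterOf_rel {wa wb : Exec} {u1 u2 : Elem} (h : Rel wa wb u1 u2) :
    letterOf wa u1 = letterOf wb u2 := by
  rcases h with ⟨p, h1, h2⟩ | ⟨i, j, σ, h1, h2, h3, h4⟩
  · simp [h1, h2, letterOf]
  · simp [h1, h2, letterOf, h3, h4]

/-- Extension step of the back-and-forth argument. -/
lemma extend_elem (P : ProcTriple) (wa wb : Exec) (K : ℕ)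
    (hcnt : SCond wa wb K) (va vb : ℕ → Elem)
    (hrel : ∀ x, Rel wa wb (va x) (vb x))
    (hinj : ∀ x y, va x = va y ↔ vb x = vb y)
    (hfina : (Set.range va).Finite) (hfinb : (Set.range vb).Finite)
    (hcard : (Set.range va).ncard < K)
    (u1 : Elem) (hdom : elemDom P wa u1) :
    ∃ u2, elemDom P wb u2 ∧ Rel wa wb u1 u2 ∧ ∀ y, (va y = u1 ↔ vb y = u2) := by
  classical
  cases u1 with
  | inl p =>
      refine ⟨Sum.inl p, hdom, Or.inl ⟨p, rfl, rfl⟩, ?_⟩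
      intro y
      rcases hrel y with ⟨q, h1, h2⟩ | ⟨i, j, σ, h1, h2, -, -⟩
      · rw [h1, h2]
      · rw [h1, h2]; simp
  | inr i =>
      have hdom' : wa.posDom i := hdom
      obtain ⟨σ, hσ⟩ := exists_at?_of_posDom hdom'
      by_cases hy : ∃ y, va y = Sum.inr i
      · obtain ⟨y0, hy0⟩ := hy
        rcases hrel y0 with ⟨q, h1, h2⟩ | ⟨i', j, σ', h1, h2, h3, h4⟩
        · rw [hy0] at h1; exact absurd h1 (by simp)
        · have hii : i' = i := by
            rw [hy0] at h1; exact (Sum.inr.inj h1.symm)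
          have h3' : wa.at? i = some σ' := hii ▸ h3
          refine ⟨Sum.inr j, posDom_of_at? h4, Or.inr ⟨i, j, σ', rfl, rfl, h3', h4⟩, ?_⟩
          intro y
          rw [← hy0, ← h2]
          exact hinj y y0
      · -- fresh position case
        set Used := {j | wb.at? j = some σ ∧ ∃ y, vb y = Sum.inr j} with hUsed
        have key : ∀ j ∈ Used,
            ∃ i', (∃ y, vb y = Sum.inr j ∧ va y = Sum.inr i') ∧
              wa.at? i' = some σ ∧ i' ≠ i := by
          rintro j ⟨hjσ, y, hyj⟩
          rcases hrel y with ⟨q, h1, h2⟩ | ⟨i', j', σ', h1, h2, h3, h4⟩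
          · rw [hyj] at h2; exact absurd h2 (by simp)
          · have hjj : j' = j := by rw [hyj] at h2; exact Sum.inr.inj h2.symm
            subst hjj
            have hσσ : σ' = σ := by rw [hjσ] at h4; exact (Option.some_inj.mp h4).symm
            subst hσσ
            exact ⟨i', ⟨y, hyj, h1⟩, h3, fun hc => hy ⟨y, hc ▸ h1⟩⟩
        choose fi hfi1 hfi2 hfi3 using key
        set F : ℕ → ℕ := fun j => if h : j ∈ Used then fi j h else 0 with hF
        have hFinj : Set.InjOn F Used := by
          intro j1 hj1 j2 hj2 hFj
          obtain ⟨z1, hz1, hz1'⟩ := hfi1 j1 hj1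
          obtain ⟨z2, hz2, hz2'⟩ := hfi1 j2 hj2
          simp only [hF, dif_pos hj1, dif_pos hj2] at hFj
          have : va z1 = va z2 := by rw [hz1', hz2', hFj]
          have := (hinj z1 z2).mp this
          rw [hz1, hz2] at this
          exact Sum.inr.inj this
        have hUsedSb : Used ⊆ {j | wb.at? j = some σ} := fun j hj => hj.1
        have main : ∃ j, wb.at? j = some σ ∧ j ∉ Used := by
          rcases hcnt σ with ⟨hA, hB, heq⟩ | ⟨-, ⟨T, hTsub, hTcard⟩⟩
          · have hmap : ∀ j ∈ Used, F j ∈ {i' | wa.at? i' = some σ} \ {i} := by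
              intro j hj
              simp only [hF, dif_pos hj]
              exact ⟨hfi2 j hj, hfi3 j hj⟩
            have h1 : Used.ncard ≤ ({i' | wa.at? i' = some σ} \ {i}).ncard :=
              Set.ncard_le_ncard_of_injOn F hmap hFinj hA.diff
            have h2 : ({i' | wa.at? i' = some σ} \ {i}).ncard
                < {i' | wa.at? i' = some σ}.ncard :=
              Set.ncard_diff_singleton_lt_of_mem hσ hA
            have hlt : Used.ncard < {j | wb.at? j = some σ}.ncard := by
              rw [← heq]; omega
            by_contra hc
            push_neg at hc
            have hsub : {j | wb.at? j = some σ} ⊆ Used := fun j hj => hc j hj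
            have := Set.ncard_le_ncard hsub (hB.subset hUsedSb)
            omega
          · have hmap : ∀ j ∈ Used, F j ∈ Sum.inr ⁻¹' (Set.range va) := by
              intro j hj
              simp only [hF, dif_pos hj]
              obtain ⟨z, hz, hz'⟩ := hfi1 j hj
              exact ⟨z, hz'⟩
            have hpre : (Sum.inr ⁻¹' (Set.range va) : Set ℕ).Finite :=
              hfina.preimage Sum.inr_injective.injOn
            have h1 : Used.ncard ≤ (Sum.inr ⁻¹' (Set.range va) : Set ℕ).ncard :=
              Set.ncard_le_ncard_of_injOn F hmap hFinj hpre
            have h2 : (Sum.inr ⁻¹' (Set.range va) : Set ℕ).ncard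
                ≤ (Set.range va).ncard :=
              Set.ncard_le_ncard_of_injOn Sum.inr (fun a ha => ha)
                Sum.inr_injective.injOn hfina
            have hUsedFin : Used.Finite := by
              have himg : (F '' Used).Finite :=
                hpre.subset (by rintro _ ⟨j, hj, rfl⟩; exact hmap j hj)
              exact Set.Finite.of_finite_image himg hFinj
            by_contra hc
            push_neg at hc
            have hsub : ↑T ⊆ Used := fun j hj => hc j (hTsub hj)
            have : T.card ≤ Used.ncard := by
              rw [← Set.ncard_coe_finset]
              exact Set.ncard_le_ncard hsub hUsedFin
            omega
        obtain ⟨j, hjσ, hjn⟩ := main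
        refine ⟨Sum.inr j, posDom_of_at? hjσ, Or.inr ⟨i, j, σ, rfl, rfl, hσ, hjσ⟩, ?_⟩
        intro y
        constructor
        · intro hc; exact absurd ⟨y, hc⟩ hy
        · intro hc; exact absurd ⟨hjσ, ⟨y, hc⟩⟩ hjn

/-- Transfer lemma: satisfaction of `FO[∼]` formulas transfers along matched
valuations between executions satisfying the counting condition. -/
lemma transfer (P : ProcTriple) (K : ℕ) :
    ∀ ψ : FO, ψ.onlySim →
    ∀ (wa wb : Exec), SCond wa wb K →
    ∀ (va vb : ℕ → Elem),
      (∀ x, Rel wa wb (va x) (vb x)) →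
      (∀ x y, va x = va y ↔ vb x = vb y) →
      (Set.range va).Finite → (Set.range vb).Finite →
      (Set.range va).ncard + qd ψ ≤ K → (Set.range vb).ncard + qd ψ ≤ K →
      Sat P wa va ψ → Sat P wb vb ψ := by
  intro ψ
  induction ψ with
  | ptype θ x =>
      intro _ wa wb hcnt va vb hrel hinj _ _ _ _ hsat
      obtain ⟨p, hp, hmem⟩ := hsat
      rcases hrel x with ⟨q, h1, h2⟩ | ⟨i, j, σ, h1, h2, -, -⟩
      · have hqp : q = p := Sum.inl.inj (h1.symm.trans hp)
        exact ⟨p, by rw [h2, hqp], hmem⟩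
      · rw [hp] at h1; exact absurd h1 (by simp)
  | letter a x =>
      intro _ wa wb hcnt va vb hrel hinj _ _ _ _ hsat
      have h := letterOf_rel (hrel x)
      show letterOf wb (vb x) = some a
      rw [← h]; exact hsat
  | eq x y =>
      intro _ wa wb hcnt va vb hrel hinj _ _ _ _ hsat
      exact (hinj x y).mp hsat
  | sim x y =>
      intro _ wa wb hcnt va vb hrel hinj _ _ _ _ hsat
      have hx := procOf_rel (hrel x)
      have hy := procOf_rel (hrel y)
      show (procOf wb (vb x)).isSome ∧ procOf wb (vb x) = procOf wb (vb y)
      rw [← hx, ← hy]; exact hsat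
  | lt x y => intro hsim; exact absurd hsim (by simp [FO.onlySim])
  | succ x y => intro hsim; exact absurd hsim (by simp [FO.onlySim])
  | not ψ ih =>
      intro hsim wa wb hcnt va vb hrel hinj hfa hfb hca hcb hsat
      have hsim' : ψ.onlySim := hsim
      have hca' : (Set.range va).ncard + qd ψ ≤ K := hca
      have hcb' : (Set.range vb).ncard + qd ψ ≤ K := hcb
      intro hb
      exact hsat (ih hsim' wb wa hcnt.symm' vb va
        (fun z => (hrel z).symm') (fun z y => (hinj z y).symm) hfb hfa hcb' hca' hb)
  | or ψ1 ψ2 ih1 ih2 =>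
      intro hsim wa wb hcnt va vb hrel hinj hfa hfb hca hcb hsat
      obtain ⟨hs1, hs2⟩ := (hsim : ψ1.onlySim ∧ ψ2.onlySim)
      have hq : qd (.or ψ1 ψ2) = max (qd ψ1) (qd ψ2) := rfl
      rw [hq] at hca hcb
      rcases hsat with hsat | hsat
      · exact Or.inl (ih1 hs1 wa wb hcnt va vb hrel hinj hfa hfb
          (by omega) (by omega) hsat)
      · exact Or.inr (ih2 hs2 wa wb hcnt va vb hrel hinj hfa hfb
          (by omega) (by omega) hsat)
  | ex x ψ ih =>
      intro hsim wa wb hcnt va vb hrel hinj hfa hfb hca hcb hsat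
      have hq : qd (.ex x ψ) = qd ψ + 1 := rfl
      rw [hq] at hca hcb
      obtain ⟨u1, hdom1, hsat1⟩ := hsat
      obtain ⟨u2, hdom2, hrel12, hcompat⟩ :=
        extend_elem P wa wb K hcnt va vb hrel hinj hfa hfb (by omega) u1 hdom1
      have hsuba : Set.range (Function.update va x u1) ⊆ insert u1 (Set.range va) := by
        rintro e ⟨z, rfl⟩
        by_cases hz : z = x
        · subst hz; rw [Function.update_self]; exact Set.mem_insert _ _
        · rw [Function.update_of_ne hz]; exact Set.mem_insert_of_mem _ ⟨z, rfl⟩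
      have hsubb : Set.range (Function.update vb x u2) ⊆ insert u2 (Set.range vb) := by
        rintro e ⟨z, rfl⟩
        by_cases hz : z = x
        · subst hz; rw [Function.update_self]; exact Set.mem_insert _ _
        · rw [Function.update_of_ne hz]; exact Set.mem_insert_of_mem _ ⟨z, rfl⟩
      refine ⟨u2, hdom2, ?_⟩
      refine ih (hsim : ψ.onlySim) wa wb hcnt
        (Function.update va x u1) (Function.update vb x u2) ?_ ?_
        ((hfa.insert u1).subset hsuba) ((hfb.insert u2).subset hsubb) ?_ ?_ hsat1
      · intro z
        by_cases hz : z = x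
        · subst hz; rw [Function.update_self, Function.update_self]; exact hrel12
        · rw [Function.update_of_ne hz, Function.update_of_ne hz]; exact hrel z
      · intro z y
        by_cases hz : z = x <;> by_cases hyx : y = x
        · subst hz; subst hyx; simp
        · subst hz
          rw [Function.update_self, Function.update_self, Function.update_of_ne hyx,
            Function.update_of_ne hyx]
          constructor
          · intro hc; exact ((hcompat y).mp hc.symm).symm
          · intro hc; exact ((hcompat y).mpr hc.symm).symm
        · subst hyx
          rw [Function.update_self, Function.update_self, Function.update_of_ne hz,
            Function.update_of_ne hz]
          exact hcompat z
        · rw [Function.update_of_ne hz, Function.update_of_ne hz,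
            Function.update_of_ne hyx, Function.update_of_ne hyx]
          exact hinj z y
      · have h1 : (Set.range (Function.update va x u1)).ncard
            ≤ (Set.range va).ncard + 1 :=
          le_trans (Set.ncard_le_ncard hsuba (hfa.insert u1)) (Set.ncard_insert_le _ _)
        omega
      · have h1 : (Set.range (Function.update vb x u2)).ncard
            ≤ (Set.range vb).ncard + 1 :=
          le_trans (Set.ncard_le_ncard hsubb (hfb.insert u2)) (Set.ncard_insert_le _ _)
        omega

lemma count_flatMap_replicate (L : List Event) (m : Event → ℕ) (σ : Event)
    (hnd : L.Nodup) :
    (L.flatMap fun σ' => List.replicate (m σ') σ').count σ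
      = if σ ∈ L then m σ else 0 := by
  induction L with
  | nil => simp
  | cons a t ih =>
      rw [List.flatMap_cons, List.count_append, List.count_replicate,
        ih hnd.of_cons]
      by_cases h : σ = a
      · subst h
        have hnotmem : σ ∉ t := (List.nodup_cons.mp hnd).1
        simp [hnotmem]
      · simp [h, Ne.symm h]

lemma ncard_pos_eq_count (l : List Event) (σ : Event) :
    {j | (Exec.fin l).at? j = some σ}.ncard = l.count σ := by
  induction l with
  | nil => simp [Exec.at?]
  | cons a t ih =>
      have hfin : {j | (Exec.fin t).at? j = some σ}.Finite :=
        Set.Finite.subset (Set.finite_Iio t.length) (fun j hj => posDom_of_at? hj)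
      have hset : {j | (Exec.fin (a :: t)).at? j = some σ}
          = (if a = σ then {0} else ∅) ∪
            Nat.succ '' {j | (Exec.fin t).at? j = some σ} := by
        ext j
        cases j with
        | zero =>
            by_cases h : a = σ
            · simp [Exec.at?, h, Set.mem_image]
            · simp only [Exec.at?, List.getElem?_cons_zero, Option.some_inj,
                Set.mem_setOf_eq, Set.mem_union, Set.mem_image, if_neg h]
              constructor
              · exact fun hc => absurd hc h
              · rintro (hc | ⟨j, -, hj⟩)
                · exact absurd hc (Set.notMem_empty 0)
                · exact absurd hj (Nat.succ_ne_zero j)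
        | succ j =>
            by_cases h : a = σ <;>
              simp [Exec.at?, h, Set.mem_image, Nat.succ_eq_add_one]
      rw [hset]
      by_cases h : a = σ
      · have h0 : (0 : ℕ) ∉ Nat.succ '' {j | (Exec.fin t).at? j = some σ} := by
          rintro ⟨j, -, hj⟩; exact Nat.succ_ne_zero j hj
        rw [if_pos h]
        have : ({0} : Set ℕ) ∪ Nat.succ '' {j | (Exec.fin t).at? j = some σ}
            = insert 0 (Nat.succ '' {j | (Exec.fin t).at? j = some σ}) :=
          (Set.insert_eq _ _).symm
        rw [this, Set.ncard_insert_of_notMem h0 (hfin.image _),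
          Set.ncard_image_of_injective _ Nat.succ_injective, ih, h,
          List.count_cons_self]
      · rw [if_neg h]
        rw [Set.empty_union, Set.ncard_image_of_injective _ Nat.succ_injective, ih,
          List.count_cons]
        simp [Ne.symm h]
        exact h

/-- Finite model property for FO[∼]: if a sentence `φ ∈ FO_A[∼]` is
satisfied by some pair `(P, w)` with `w` an infinite `P`-execution, then it is
satisfied by some pair `(P', w')` with `w'` a finite `P'`-execution. -/
theorem finite_model_property_FOsim (Alph : Alphabet) (φ : FO)
    (hsen : φ.isSentence) (hsim : φ.onlySim)
    (h : ∃ (P : ProcTriple) (g : ℕ → Event),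
      Exec.valid Alph P (Exec.inf g) ∧ SatS P (Exec.inf g) φ) :
    ∃ (P' : ProcTriple) (l : List Event),
      Exec.valid Alph P' (Exec.fin l) ∧ SatS P' (Exec.fin l) φ := by
  classical
  obtain ⟨P, g, hval, hsat⟩ := h
  set K : ℕ := qd φ + 1 with hK
  set Sa : Event → Set ℕ := fun σ => {i | (Exec.inf g).at? i = some σ} with hSa
  set m : Event → ℕ := fun σ => if h : (Sa σ).Finite then (Sa σ).ncard else K with hm
  set E : Finset Event := Finset.range Alph.n ×ˢ P.all with hE
  set l : List Event := E.toList.flatMap (fun σ => List.replicate (m σ) σ) with hl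
  have hmemSa : ∀ σ i, i ∈ Sa σ ↔ g i = σ := by
    intro σ i
    simp [hSa, Exec.at?]
  have hgE : ∀ i, g i ∈ E := by
    intro i
    have hv := hval i
    rcases hv with ⟨h1, -, h3⟩ | ⟨h1, -, h3⟩ <;>
      · rw [hE, Finset.mem_product]
        refine ⟨Finset.mem_range.mpr h1, ?_⟩
        unfold ProcTriple.all
        rcases h3 with h3 | h3 <;> simp [h3]
  have hcount : ∀ σ, l.count σ = if σ ∈ E then m σ else 0 := by
    intro σ
    rw [hl, count_flatMap_replicate E.toList m σ E.nodup_toList]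
    simp [Finset.mem_toList]
  have hSaE : ∀ σ, σ ∉ E → Sa σ = ∅ := by
    intro σ hσ
    ext i
    simp only [Set.mem_empty_iff_false, iff_false, hmemSa]
    intro hc; exact hσ (hc ▸ hgE i)
  -- validity of the finite execution
  have hvalid : Exec.valid Alph P (Exec.fin l) := by
    intro σ hσ
    rw [hl, List.mem_flatMap] at hσ
    obtain ⟨σ', -, hσ'⟩ := hσ
    obtain ⟨hm0, heq⟩ := List.mem_replicate.mp hσ'
    subst heq
    have hne : (Sa σ).Nonempty := by
      by_cases hf : (Sa σ).Finite
      · refine Set.nonempty_of_ncard_ne_zero ?_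
        intro hc
        apply hm0
        rw [hm]
        simp [hf, hc]
      · exact (Set.Infinite.nonempty hf)
    obtain ⟨i, hi⟩ := hne
    rw [hmemSa] at hi
    exact hi ▸ hval i
  -- the counting condition
  have hcnt : SCond (Exec.inf g) (Exec.fin l) K := by
    intro σ
    have hSbfin : {j | (Exec.fin l).at? j = some σ}.Finite :=
      Set.Finite.subset (Set.finite_Iio l.length) (fun j hj => posDom_of_at? hj)
    have hSbcard : {j | (Exec.fin l).at? j = some σ}.ncard = l.count σ :=
      ncard_pos_eq_count l σ
    by_cases hf : (Sa σ).Finite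
    · left
      refine ⟨hf, hSbfin, ?_⟩
      show (Sa σ).ncard = {j | (Exec.fin l).at? j = some σ}.ncard
      rw [hSbcard, hcount σ]
      by_cases hσE : σ ∈ E
      · rw [if_pos hσE, hm]; simp [hf]
      · rw [if_neg hσE, hSaE σ hσE]; simp
    · right
      have hinf : (Sa σ).Infinite := hf
      have hσE : σ ∈ E := by
        obtain ⟨i, hi⟩ := hinf.nonempty
        rw [hmemSa] at hi
        exact hi ▸ hgE i
      have hcountK : l.count σ = K := by
        rw [hcount σ, if_pos hσE, hm]; simp [hf]
      constructor
      · obtain ⟨T, hT1, hT2⟩ := hinf.exists_subset_card_eq K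
        exact ⟨T, hT1, le_of_eq hT2.symm⟩
      · refine ⟨hSbfin.toFinset, by simp, ?_⟩
        rw [← Set.ncard_eq_toFinset_card _ hSbfin, hSbcard, hcountK]
  -- transfer satisfaction
  have hrange : Set.range (fun _ : ℕ => (Sum.inl 0 : Elem)) = {Sum.inl 0} :=
    Set.range_const
  have hfin0 : (Set.range (fun _ : ℕ => (Sum.inl 0 : Elem))).Finite := by
    rw [hrange]; exact Set.finite_singleton _
  have hcard0 : (Set.range (fun _ : ℕ => (Sum.inl 0 : Elem))).ncard + qd φ ≤ K := by
    rw [hrange, Set.ncard_singleton]; omega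
  have hsat' : Sat P (Exec.fin l) (fun _ => Sum.inl 0) φ :=
    transfer P K φ hsim (Exec.inf g) (Exec.fin l) hcnt
      (fun _ => Sum.inl 0) (fun _ => Sum.inl 0)
      (fun _ => Or.inl ⟨0, rfl, rfl⟩) (fun _ _ => Iff.rfl)
      hfin0 hfin0 hcard0 hcard0 hsat
  exact ⟨P, l, hvalid, hsat'⟩

end PSyn
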